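/- For every finite sequence of digits a_t, …, a_0 with each a_i ∈ {0, 1, 2}, one has −2 + 2√3/3 < [x0]_K − γ·[x]_K < 2√3/3, where γ = 1 + √3, [x]_K = ∑_{0 ≤ i ≤ t} a_i·𝒦_i, and [x0]_K = ∑_{0 ≤ i ≤ t} a_i·𝒦_{i+1} (i.e., the value of the digit string with a 0 appended at the least significant end). -/

import Mathlib

open Finset

/-- The sequence 𝒦 with 𝒦₀ = 1, 𝒦₁ = 3, 𝒦ₙ = 2𝒦ₙ₋₁ + 2𝒦ₙ₋₂. -/
def Kcal : ℕ → ℕ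
  | 0 => 1
  | 1 => 3
  | (n + 2) => 2 * Kcal (n + 1) + 2 * Kcal n

/-- For a digit string `x = a_t ⋯ a_0`, given here as the list `l = [a_0, a_1, …, a_t]`
(least significant digit first), `[x]_K = ∑ a_i 𝒦_i`. -/
def valK (l : List ℕ) : ℕ := ∑ i ∈ Finset.range l.length, l.getD i 0 * Kcal i

/-- `[x0]_K = ∑ a_i 𝒦_{i+1}`: the value of the digit string with a `0` appended at
the least significant end. -/
def valK0 (l : List ℕ) : ℕ := ∑ i ∈ Finset.range l.length, l.getD i 0 * Kcal (i + 1)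

lemma valK_cons (a : ℕ) (l : List ℕ) : valK (a :: l) = a + valK0 l := by
  unfold valK valK0
  rw [List.length_cons, Finset.sum_range_succ']
  simp [Kcal]
  ring

lemma valK0_cons (a : ℕ) (l : List ℕ) :
    valK0 (a :: l) = 3 * a + 2 * valK0 l + 2 * valK l := by
  unfold valK valK0
  rw [List.length_cons, Finset.sum_range_succ']
  have h1 : ∀ i, Kcal (i + 1 + 1) = 2 * Kcal (i + 1) + 2 * Kcal i := fun i => rfl
  simp only [List.getD_cons_succ, List.getD_cons_zero, h1]
  have h2 : ∑ x ∈ Finset.range l.length, l.getD x 0 * (2 * Kcal (x + 1) + 2 * Kcal x)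
      = 2 * ∑ i ∈ Finset.range l.length, l.getD i 0 * Kcal (i + 1)
        + 2 * ∑ i ∈ Finset.range l.length, l.getD i 0 * Kcal i := by
    rw [Finset.mul_sum, Finset.mul_sum, ← Finset.sum_add_distrib]
    exact Finset.sum_congr rfl fun i _ => by ring
  rw [h2, show Kcal (0 + 1) = 3 from rfl]
  ring

theorem valK0_sub_gamma_valK_bounds :
    ∀ l : List ℕ, (∀ d ∈ l, d ≤ 2) →
      -2 + 2 * Real.sqrt 3 / 3 < (valK0 l : ℝ) - (1 + Real.sqrt 3) * (valK l : ℝ) ∧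
      (valK0 l : ℝ) - (1 + Real.sqrt 3) * (valK l : ℝ) < 2 * Real.sqrt 3 / 3 := by
  have hs2 : Real.sqrt 3 ^ 2 = 3 := Real.sq_sqrt (by norm_num)
  have hs1 : 1 < Real.sqrt 3 := by nlinarith [Real.sqrt_nonneg 3]
  have hs2' : Real.sqrt 3 < 2 := by nlinarith [Real.sqrt_nonneg 3]
  intro l
  induction l with
  | nil =>
      intro _
      refine ⟨?_, ?_⟩ <;> simp [valK, valK0] <;> nlinarith
  | cons a l ih =>
      intro h
      have ha : (a : ℝ) ≤ 2 := by
        exact_mod_cast h a List.mem_cons_self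
      have ha0 : (0 : ℝ) ≤ (a : ℝ) := Nat.cast_nonneg a
      obtain ⟨ih1, ih2⟩ := ih (fun d hd => h d (List.mem_cons_of_mem a hd))
      have e1 : ((valK0 (a :: l) : ℝ)) = 3 * a + 2 * valK0 l + 2 * valK l := by
        rw [valK0_cons]; push_cast; ring
      have e2 : ((valK (a :: l) : ℝ)) = a + valK0 l := by
        rw [valK_cons]; push_cast; ring
      rw [e1, e2]
      have key : (valK0 (a::l) : ℝ) - (1 + Real.sqrt 3) * (valK (a::l) : ℝ) =
          (2 - Real.sqrt 3) * a +
          (1 - Real.sqrt 3) * ((valK0 l : ℝ) - (1 + Real.sqrt 3) * (valK l : ℝ)) := by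
        rw [e1, e2]; nlinarith [hs2]
      rw [e1, e2] at key
      rw [key]
      constructor
      · nlinarith
      · nlinarith
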